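/- Let K ⊆ ℝ^d be a nonempty convex set, let f : ℝ^d → ℝ be convex and differentiable, let w* ∈ K, let α_1,…,α_T be positive weights, let w_1,…,w_T ∈ K with anytime averages x_t = (Σ_{i=1}^t α_i w_i)/α_{1:t}, and let τ_1,…,τ_T be integers with 0 ≤ τ_t ≤ t − 1. Then Σ_{t=1}^T α_t·(f(x_t) − f(w*)) ≤ Σ_{t=1}^T α_{1:t−1}·⟨∇f(x_t), x_{t−1} − x_t⟩ + Σ_{t=1}^T α_t·⟨∇f(x_{t−τ_t}), w_t − w*⟩ + Σ_{t=1}^T α_t·‖∇f(x_t) − ∇f(x_{t−τ_t})‖·‖w_t − w*‖, where α_{1:0} = 0 (so the t = 1 summand of the first sum vanishes). -/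

import Mathlib

open Finset
open scoped RealInnerProductSpace

lemma grad_ineq_aux {d : ℕ} (f : EuclideanSpace ℝ (Fin d) → ℝ)
    (hconv : ConvexOn ℝ Set.univ f) (hdiff : Differentiable ℝ f)
    (a b : EuclideanSpace ℝ (Fin d)) :
    f a + ⟪gradient f a, b - a⟫ ≤ f b := by
  set g : ℝ → ℝ := fun s => f (a + s • (b - a)) with hg
  have hgconv : ConvexOn ℝ Set.univ g := by
    have := hconv.comp_affineMap (AffineMap.lineMap a b : ℝ →ᵃ[ℝ] _)
    refine (this.subset (Set.subset_univ _) convex_univ).congr ?_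
    intro s _
    simp [g, AffineMap.lineMap_apply]
    congr 1
    module
  have hcurve : HasDerivAt (fun s : ℝ => a + s • (b - a)) (b - a) 0 := by
    simpa using ((hasDerivAt_id (0:ℝ)).smul_const (b - a)).const_add a
  have hF : HasFDerivAt f (InnerProductSpace.toDual ℝ _ (gradient f a)) a :=
    (hasGradientAt_iff_hasFDerivAt.mp (hdiff a).hasGradientAt)
  have hgderiv : HasDerivAt g ⟪gradient f a, b - a⟫ 0 := by
    have hF' : HasFDerivAt f (InnerProductSpace.toDual ℝ _ (gradient f a)) (a + (0:ℝ) • (b - a)) := by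
      simpa using hF
    have := hF'.comp_hasDerivAt (0:ℝ) hcurve
    simpa [g, Function.comp_def] using this
  have := hgconv.le_slope_of_hasDerivWithinAt_Ioi (Set.mem_univ 0) (Set.mem_univ 1)
    one_pos (hgderiv.hasDerivWithinAt)
  rw [slope_def_field] at this
  simp only [g, zero_smul, one_smul, add_zero] at this
  have h1 : (f (a + (b - a)) - f a) / (1 - 0) = f (a + (b - a)) - f a := by norm_num
  rw [h1] at this
  have : f a + ⟪gradient f a, b - a⟫ ≤ f (a + (b - a)) := by linarith
  simpa using this

/-- Decomposition of the weighted excess loss of the anytime averages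
into the anytime-shift term, the (linearized, delayed) regret term, and the delay
discrepancy term. Here `α_{1:0} = 0` so the `t = 1` summand of the first sum vanishes. -/
theorem stmt_6 {d T : ℕ} (K : Set (EuclideanSpace ℝ (Fin d)))
    (hK : K.Nonempty) (hKconv : Convex ℝ K)
    (f : EuclideanSpace ℝ (Fin d) → ℝ)
    (hconv : ConvexOn ℝ Set.univ f) (hdiff : Differentiable ℝ f)
    (wstar : EuclideanSpace ℝ (Fin d)) (hws : wstar ∈ K)
    (α : ℕ → ℝ) (hα : ∀ t ∈ Icc 1 T, 0 < α t)
    (w x : ℕ → EuclideanSpace ℝ (Fin d))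
    (hw : ∀ t ∈ Icc 1 T, w t ∈ K)
    (hx : ∀ t ∈ Icc 1 T, x t = (∑ i ∈ Icc 1 t, α i)⁻¹ • ∑ i ∈ Icc 1 t, α i • w i)
    (τ : ℕ → ℕ) (hτ : ∀ t ∈ Icc 1 T, τ t ≤ t - 1) :
    ∑ t ∈ Icc 1 T, α t * (f (x t) - f wstar) ≤
      (∑ t ∈ Icc 1 T, (∑ i ∈ Icc 1 (t - 1), α i) * ⟪gradient f (x t), x (t - 1) - x t⟫)
      + (∑ t ∈ Icc 1 T, α t * ⟪gradient f (x (t - τ t)), w t - wstar⟫)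
      + ∑ t ∈ Icc 1 T, α t * (‖gradient f (x t) - gradient f (x (t - τ t))‖ * ‖w t - wstar‖) := by
  set S : ℕ → ℝ := fun k => ∑ i ∈ Icc 1 k, α i with hS
  -- partial sums times averages equal weighted sums
  have hsum : ∀ t ∈ Icc 1 T, S t • x t = ∑ i ∈ Icc 1 t, α i • w i := by
    intro t ht
    rw [mem_Icc] at ht
    have hpos : 0 < S t := by
      apply Finset.sum_pos
      · intro i hi
        exact hα i (by rw [mem_Icc] at hi ⊢; omega)
      · exact Finset.nonempty_Icc.2 ht.1
    rw [hx t (mem_Icc.2 ht), smul_smul, mul_inv_cancel₀ hpos.ne', one_smul]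
  -- the key vector identity
  have key : ∀ t ∈ Icc 1 T,
      α t • (x t - wstar) = S (t - 1) • (x (t - 1) - x t) + α t • (w t - wstar) := by
    intro t ht
    have htm := mem_Icc.1 ht
    obtain ⟨s, rfl⟩ : ∃ s, t = s + 1 := ⟨t - 1, by omega⟩
    have hs1 : s + 1 - 1 = s := by omega
    rw [hs1]
    have h1 : S (s + 1) • x (s + 1) = ∑ i ∈ Icc 1 (s + 1), α i • w i := hsum _ ht
    have hsplit : ∑ i ∈ Icc 1 (s + 1), α i • w i
        = (∑ i ∈ Icc 1 s, α i • w i) + α (s + 1) • w (s + 1) :=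
      Finset.sum_Icc_succ_top (by omega) _
    have hSsplit : S (s + 1) = S s + α (s + 1) := Finset.sum_Icc_succ_top (by omega) _
    have h2 : S s • x s = ∑ i ∈ Icc 1 s, α i • w i := by
      rcases Nat.eq_zero_or_pos s with hs0 | hs0
      · subst hs0; simp [S]
      · exact hsum s (mem_Icc.2 ⟨hs0, by omega⟩)
    rw [hsplit, ← h2, hSsplit] at h1
    linear_combination (norm := module) h1
  -- pointwise inequality
  have hterm : ∀ t ∈ Icc 1 T,
      α t * (f (x t) - f wstar) ≤
        S (t - 1) * ⟪gradient f (x t), x (t - 1) - x t⟫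
        + α t * ⟪gradient f (x (t - τ t)), w t - wstar⟫
        + α t * (‖gradient f (x t) - gradient f (x (t - τ t))‖ * ‖w t - wstar‖) := by
    intro t ht
    have hαt := (hα t ht).le
    have hgrad : f (x t) - f wstar ≤ ⟪gradient f (x t), x t - wstar⟫ := by
      have := grad_ineq_aux f hconv hdiff (x t) wstar
      have hneg : ⟪gradient f (x t), wstar - x t⟫ = -⟪gradient f (x t), x t - wstar⟫ := by
        rw [← inner_neg_right]; congr 1; abel
      rw [hneg] at this; linarith
    have step1 : α t * (f (x t) - f wstar) ≤ α t * ⟪gradient f (x t), x t - wstar⟫ :=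
      mul_le_mul_of_nonneg_left hgrad hαt
    have step2 : α t * ⟪gradient f (x t), x t - wstar⟫
        = S (t - 1) * ⟪gradient f (x t), x (t - 1) - x t⟫
          + α t * ⟪gradient f (x t), w t - wstar⟫ := by
      have := congrArg (fun v => ⟪gradient f (x t), v⟫) (key t ht)
      simp only [inner_add_right, real_inner_smul_right] at this
      exact this
    have step3 : α t * ⟪gradient f (x t), w t - wstar⟫
        ≤ α t * ⟪gradient f (x (t - τ t)), w t - wstar⟫
          + α t * (‖gradient f (x t) - gradient f (x (t - τ t))‖ * ‖w t - wstar‖) := by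
      have hdecomp : ⟪gradient f (x t), w t - wstar⟫
          = ⟪gradient f (x (t - τ t)), w t - wstar⟫
            + ⟪gradient f (x t) - gradient f (x (t - τ t)), w t - wstar⟫ := by
        rw [inner_sub_left]; ring
      have hcs : ⟪gradient f (x t) - gradient f (x (t - τ t)), w t - wstar⟫
          ≤ ‖gradient f (x t) - gradient f (x (t - τ t))‖ * ‖w t - wstar‖ :=
        real_inner_le_norm _ _
      rw [hdecomp, mul_add]
      gcongr
    linarith
  calc ∑ t ∈ Icc 1 T, α t * (f (x t) - f wstar)
      ≤ ∑ t ∈ Icc 1 T, (S (t - 1) * ⟪gradient f (x t), x (t - 1) - x t⟫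
          + α t * ⟪gradient f (x (t - τ t)), w t - wstar⟫
          + α t * (‖gradient f (x t) - gradient f (x (t - τ t))‖ * ‖w t - wstar‖)) :=
        Finset.sum_le_sum hterm
    _ = _ := by rw [Finset.sum_add_distrib, Finset.sum_add_distrib]
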